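/- Let G be a connected simple undirected graph on vertex set {1,…,N} with N ≥ 3, let L be its Laplacian, let λ₂ = inf{ (vᵀLv)/(vᵀv) : v ∈ ℝ^N, v ≠ 0, 1ᵀv = 0 } (so λ₂ > 0), and let x : [0,∞) → ℝ^N be differentiable with γ := sup_{τ ≥ 0} ‖(I − (1/N)·1·1ᵀ)·x'(τ)‖₂ < ∞. Then for every ε > 0 there exists β₀ > 0 such that for every β ≥ β₀ and every differentiable x̂ : [0,∞) → ℝ^N satisfying x̂'(t) = x'(t) − β·L·x̂(t) with x̂(0) = x(0) + m, where m = (φᵀ − φ)·1 for some φ with φ_{ij} = 0 whenever {i,j} is not an edge of G, it holds for every agent i that limsup_{t→∞} |x̂_i(t) − (1/N)·Σ_{j=1}^N x_j(t)| ≤ ε. That is, the ultimate tracking-error bound of the masked DAC algorithm can be made arbitrarily small by choosing the gain β sufficiently large. -/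

import Mathlib

open Matrix Filter

lemma spectral_gap {N : ℕ} (hN : 0 < N) (G : SimpleGraph (Fin N)) [DecidableRel G.Adj]
    (hconn : G.Connected) :
    ∃ c > (0:ℝ), ∀ v : Fin N → ℝ, (∑ i, v i) = 0 →
      c * (∑ i, (v i)^2) ≤ v ⬝ᵥ (G.lapMatrix ℝ *ᵥ v) := by
  set M : Matrix (Fin N) (Fin N) ℝ :=
    G.lapMatrix ℝ + (N : ℝ)⁻¹ • Matrix.of (fun _ _ => (1:ℝ)) with hM
  have hNR : (0:ℝ) < N := by exact_mod_cast hN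
  -- quadratic form decomposition
  have hq : ∀ v : Fin N → ℝ, v ⬝ᵥ (M *ᵥ v)
      = v ⬝ᵥ (G.lapMatrix ℝ *ᵥ v) + (N : ℝ)⁻¹ * (∑ i, v i)^2 := by
    intro v
    have hJ : ((Matrix.of (fun _ _ => (1:ℝ)) : Matrix (Fin N) (Fin N) ℝ) *ᵥ v) = fun _ => ∑ j, v j := by
      ext i; simp [Matrix.mulVec, dotProduct]
    rw [hM, Matrix.add_mulVec, dotProduct_add, Matrix.smul_mulVec,
      dotProduct_smul, hJ]
    congr 1
    simp [dotProduct, smul_eq_mul, ← Finset.sum_mul, sq]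
  -- PSD of lapMatrix quadratic form
  have hpsd : ∀ v : Fin N → ℝ, 0 ≤ v ⬝ᵥ (G.lapMatrix ℝ *ᵥ v) := by
    intro v
    have := (SimpleGraph.posSemidef_lapMatrix ℝ G).dotProduct_mulVec_nonneg v
    simpa using this
  -- positivity of M's form on nonzero vectors
  have hMpos : ∀ v : Fin N → ℝ, v ≠ 0 → 0 < v ⬝ᵥ (M *ᵥ v) := by
    intro v hv
    rw [hq]
    rcases lt_or_eq_of_le (hpsd v) with h | h
    · have : 0 ≤ (N : ℝ)⁻¹ * (∑ i, v i)^2 := by positivity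
      linarith
    rcases lt_or_eq_of_le (sq_nonneg (∑ i, v i)) with h2 | h2
    · have : 0 < (N : ℝ)⁻¹ * (∑ i, v i)^2 := by positivity
      linarith
    -- both zero: derive v = 0, contradiction
    exfalso
    have hform : Matrix.toLinearMap₂' ℝ (G.lapMatrix ℝ) v v = 0 := by
      rw [Matrix.toLinearMap₂'_apply', ← h]
    have hconst := (G.lapMatrix_toLinearMap₂'_apply'_eq_zero_iff_forall_reachable v).mp hform
    obtain ⟨i0⟩ : Nonempty (Fin N) := ⟨⟨0, hN⟩⟩
    have hvi : ∀ i, v i = v i0 := fun i => hconst i i0 (hconn.preconnected i i0)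
    have hsum : ∑ i, v i = (N : ℝ) * v i0 := by
      rw [Finset.sum_congr rfl (fun i _ => hvi i)]
      simp [Finset.sum_const, Finset.card_univ, mul_comm]
    have : v i0 = 0 := by
      have h3 : (∑ i, v i) = 0 := by
        have := h2.symm
        exact pow_eq_zero_iff (n := 2) (by norm_num) |>.mp (by linarith [sq_nonneg (∑ i, v i)] : (∑ i, v i)^2 = 0)
      rw [hsum] at h3
      exact (mul_eq_zero.mp h3).resolve_left (ne_of_gt hNR)
    exact hv (funext fun i => by simp [hvi i, this])
  -- compact set: unit sphere of sum-of-squares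
  set S : Set (Fin N → ℝ) := {v | ∑ i, (v i)^2 = 1} with hS
  have hclosed : IsClosed S := isClosed_eq (by continuity) continuous_const
  have hbdd : Bornology.IsBounded S := by
    rw [Metric.isBounded_iff_subset_closedBall 0]
    refine ⟨1, fun v hv => ?_⟩
    rw [Metric.mem_closedBall, dist_zero_right]
    rw [pi_norm_le_iff_of_nonneg zero_le_one]
    intro i
    rw [Real.norm_eq_abs, abs_le]
    have h1 : (v i)^2 ≤ 1 := by
      rw [← hv]
      exact Finset.single_le_sum (f := fun i => (v i)^2) (fun j _ => sq_nonneg _) (Finset.mem_univ i)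
    constructor <;> nlinarith
  have hcompact : IsCompact S := Metric.isCompact_of_isClosed_isBounded hclosed hbdd
  have hne : S.Nonempty := by
    refine ⟨Pi.single ⟨0, hN⟩ 1, ?_⟩
    simp only [hS, Set.mem_setOf_eq]
    rw [Finset.sum_eq_single ⟨0, hN⟩]
    · simp
    · intro j _ hj; rw [Pi.single_eq_of_ne hj]; ring
    · intro h; exact absurd (Finset.mem_univ _) h
  have hcont : ContinuousOn (fun v : Fin N → ℝ => v ⬝ᵥ (M *ᵥ v)) S := by
    apply Continuous.continuousOn
    unfold dotProduct Matrix.mulVec dotProduct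
    continuity
  obtain ⟨v0, hv0S, hmin⟩ := hcompact.exists_isMinOn hne hcont
  refine ⟨v0 ⬝ᵥ (M *ᵥ v0), ?_, ?_⟩
  · apply hMpos
    intro h
    rw [h] at hv0S
    simp only [hS, Set.mem_setOf_eq] at hv0S
    simp at hv0S
  · intro v hvsum
    rcases eq_or_ne v 0 with rfl | hv
    · simp
    · set s := ∑ i, (v i)^2 with hs
      have hspos : 0 < s := by
        rcases Function.ne_iff.mp hv with ⟨i, hi⟩
        have hi' : v i ≠ 0 := by simpa using hi
        have : 0 < (v i)^2 := by rcases lt_or_gt_of_ne hi' with h|h <;> nlinarith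
        have hle : (v i)^2 ≤ s := Finset.single_le_sum (f := fun i => (v i)^2) (fun j _ => sq_nonneg _) (Finset.mem_univ i)
        linarith
      set u : Fin N → ℝ := (Real.sqrt s)⁻¹ • v with hu
      have hsq : ((Real.sqrt s)⁻¹)^2 = s⁻¹ := by
        rw [← Real.sqrt_inv]
        exact Real.sq_sqrt (by positivity)
      have huS : u ∈ S := by
        simp only [hS, Set.mem_setOf_eq, hu, Pi.smul_apply, smul_eq_mul, mul_pow]
        rw [← Finset.mul_sum, ← hs, hsq]
        field_simp
      have husum : ∑ i, u i = 0 := by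
        simp only [hu, Pi.smul_apply, smul_eq_mul, ← Finset.mul_sum, hvsum, mul_zero]
      have hqu : u ⬝ᵥ (M *ᵥ u) = s⁻¹ * (v ⬝ᵥ (G.lapMatrix ℝ *ᵥ v)) := by
        rw [hq u, husum]
        have : u ⬝ᵥ (G.lapMatrix ℝ *ᵥ u) = ((Real.sqrt s)⁻¹)^2 * (v ⬝ᵥ (G.lapMatrix ℝ *ᵥ v)) := by
          rw [hu, Matrix.mulVec_smul, dotProduct_smul, smul_dotProduct]
          simp [smul_eq_mul, sq]; ring
        rw [this, hsq]; ring
      have := hmin huS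
      simp only [Set.mem_setOf_eq] at this
      rw [hqu] at this
      calc (v0 ⬝ᵥ (M *ᵥ v0)) * s ≤ (s⁻¹ * (v ⬝ᵥ (G.lapMatrix ℝ *ᵥ v))) * s := by
            exact mul_le_mul_of_nonneg_right this (le_of_lt hspos)
        _ = v ⬝ᵥ (G.lapMatrix ℝ *ᵥ v) := by field_simp

open Matrix Filter Topology

/-- the ultimate tracking-error bound of the masked DAC algorithm can be
made arbitrarily small by choosing the gain `β` sufficiently large: for every `ε > 0`
there is `β₀ > 0` such that for every `β ≥ β₀`, every mask `m = (φᵀ − φ)·1` supported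
on the edges of `G`, and every solution `xhat` of the masked DAC dynamics with
`xhat(0) = x(0) + m`, each agent's estimate is ultimately within `ε` of the average. -/
theorem masked_dac_bound_arbitrarily_small
    (N : ℕ) (hN : 3 ≤ N) (G : SimpleGraph (Fin N)) [DecidableRel G.Adj]
    (hconn : G.Connected)
    (L : Matrix (Fin N) (Fin N) ℝ) (hL : L = G.lapMatrix ℝ)
    (lam2 : ℝ)
    (hlam2 : lam2 = sInf {r : ℝ | ∃ v : Fin N → ℝ, v ≠ 0 ∧ (∑ i, v i) = 0 ∧
        r = (v ⬝ᵥ (L *ᵥ v)) / (v ⬝ᵥ v)})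
    (x : ℝ → Fin N → ℝ) (hx : Differentiable ℝ x)
    (γ : ℝ)
    (hγ : IsLUB {r : ℝ | ∃ τ ≥ (0 : ℝ), r = Real.sqrt (∑ i,
        ((((1 : Matrix (Fin N) (Fin N) ℝ)
            - (N : ℝ)⁻¹ • Matrix.of (fun _ _ => (1 : ℝ))) *ᵥ deriv x τ) i) ^ 2)} γ) :
    ∀ ε > (0 : ℝ), ∃ β₀ > (0 : ℝ), ∀ β ≥ β₀,
      ∀ xhat : ℝ → Fin N → ℝ, ∀ φ : Matrix (Fin N) (Fin N) ℝ,
        (∀ i j, (¬ G.Adj i j ∨ i = j) → φ i j = 0) →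
        xhat 0 = x 0 + (φ.transpose - φ) *ᵥ (fun _ => (1 : ℝ)) →
        (∀ t ≥ (0 : ℝ), HasDerivAt xhat (deriv x t - β • (L *ᵥ xhat t)) t) →
        ∀ i : Fin N,
          limsup (fun t : ℝ => |xhat t i - (∑ j, x t j) / N|) atTop ≤ ε := by
  obtain ⟨c, hc0, hcgap⟩ := spectral_gap (by omega : 0 < N) G hconn
  have hNR : (0:ℝ) < N := by exact_mod_cast (by omega : 0 < N)
  have hγ0 : 0 ≤ γ := le_trans (Real.sqrt_nonneg _) (hγ.1 ⟨0, le_refl 0, rfl⟩)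
  have hproj : ∀ t ≥ (0:ℝ),
      Real.sqrt (∑ i, (deriv x t i - (∑ j, deriv x t j) / N)^2) ≤ γ := by
    intro t ht
    have hmem : Real.sqrt (∑ i,
        ((((1 : Matrix (Fin N) (Fin N) ℝ)
            - (N : ℝ)⁻¹ • Matrix.of (fun _ _ => (1 : ℝ))) *ᵥ deriv x t) i) ^ 2) ≤ γ :=
      hγ.1 ⟨t, ht, rfl⟩
    have hentry : ∀ i, (((1 : Matrix (Fin N) (Fin N) ℝ)
        - (N : ℝ)⁻¹ • Matrix.of (fun _ _ => (1 : ℝ))) *ᵥ deriv x t) i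
        = deriv x t i - (∑ j, deriv x t j) / N := by
      intro i
      rw [Matrix.sub_mulVec, Matrix.smul_mulVec, Matrix.one_mulVec]
      have hJ : ((Matrix.of (fun _ _ => (1:ℝ)) : Matrix (Fin N) (Fin N) ℝ) *ᵥ deriv x t) i
          = ∑ j, deriv x t j := by simp [Matrix.mulVec, dotProduct]
      simp only [Pi.sub_apply, Pi.smul_apply, hJ, smul_eq_mul]
      rw [div_eq_inv_mul]
    calc Real.sqrt (∑ i, (deriv x t i - (∑ j, deriv x t j) / N)^2)
        = Real.sqrt (∑ i,
        ((((1 : Matrix (Fin N) (Fin N) ℝ)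
            - (N : ℝ)⁻¹ • Matrix.of (fun _ _ => (1 : ℝ))) *ᵥ deriv x t) i) ^ 2) := by
          congr 1; exact Finset.sum_congr rfl fun i _ => by rw [hentry i]
      _ ≤ γ := hmem
  intro ε hε
  refine ⟨max 1 (γ / (c * ε)), lt_of_lt_of_le one_pos (le_max_left _ _), ?_⟩
  intro β hβ xhat φ hφ h0 hode i
  have hβ1 : (1:ℝ) ≤ β := le_trans (le_max_left _ _) hβ
  have hβpos : (0:ℝ) < β := lt_of_lt_of_le one_pos hβ1
  set k := β * c with hk
  have hkpos : 0 < k := mul_pos hβpos hc0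
  have hγk : γ / k ≤ ε := by
    rw [div_le_iff₀ hkpos]
    have h1 : γ / (c * ε) ≤ β := le_trans (le_max_right _ _) hβ
    rw [div_le_iff₀ (mul_pos hc0 hε)] at h1
    calc γ ≤ β * (c * ε) := h1
      _ = ε * k := by rw [hk]; ring
  -- componentwise derivatives
  have hx' : ∀ (t : ℝ) (j : Fin N), HasDerivAt (fun s => x s j) (deriv x t j) t :=
    fun t j => hasDerivAt_pi.mp (hx t).hasDerivAt j
  have hxh' : ∀ t ≥ (0:ℝ), ∀ j, HasDerivAt (fun s => xhat s j)
      (deriv x t j - β * (L *ᵥ xhat t) j) t := by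
    intro t ht j
    have := hasDerivAt_pi.mp (hode t ht) j
    simpa using this
  -- column sums of L vanish
  have hrowsum : ∀ j : Fin N, ∑ l, L j l = 0 := by
    intro j
    have h := congrFun (SimpleGraph.lapMatrix_mulVec_const_eq_zero (R := ℝ) (G := G)) j
    rw [hL]
    simpa [Matrix.mulVec, dotProduct] using h
  have hsym : ∀ a b, L a b = L b a := by
    intro a b; rw [hL]
    exact ((SimpleGraph.isSymm_lapMatrix (R := ℝ) (G := G)).apply b a)
  have hLsum : ∀ w : Fin N → ℝ, ∑ j, (L *ᵥ w) j = 0 := by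
    intro w
    calc ∑ j, (L *ᵥ w) j = ∑ j, ∑ l, L j l * w l := rfl
      _ = ∑ l, ∑ j, L j l * w l := Finset.sum_comm
      _ = ∑ l, (∑ j, L l j) * w l := by
          refine Finset.sum_congr rfl fun l _ => ?_
          rw [Finset.sum_mul]
          exact Finset.sum_congr rfl fun j _ => by rw [hsym j l]
      _ = 0 := by simp [hrowsum]
  -- the mask has zero sum
  have hmsum : ∑ j, ((φ.transpose - φ) *ᵥ (fun _ => (1:ℝ))) j = 0 := by
    have hval : ∀ j, ((φ.transpose - φ) *ᵥ (fun _ => (1:ℝ))) j = ∑ l, (φ l j - φ j l) := by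
      intro j
      simp [Matrix.mulVec, dotProduct, Matrix.sub_apply, Matrix.transpose_apply]
    rw [Finset.sum_congr rfl fun j _ => hval j]
    simp only [Finset.sum_sub_distrib]
    rw [Finset.sum_comm]
    exact sub_self _
  -- average consistency
  have hsum : ∀ t ≥ (0:ℝ), ∑ j, xhat t j = ∑ j, x t j := by
    intro t ht
    have hg : ∀ s : ℝ, 0 ≤ s →
        HasDerivAt (fun u => (∑ j, xhat u j) - ∑ j, x u j) 0 s := by
      intro s hs
      have h1 := HasDerivAt.fun_sum (fun j (_ : j ∈ Finset.univ) => hxh' s hs j)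
      have h2 := HasDerivAt.fun_sum (fun j (_ : j ∈ Finset.univ) => hx' s j)
      have h3 := h1.sub h2
      have heq : (∑ j, (deriv x s j - β * (L *ᵥ xhat s) j)) - (∑ j, deriv x s j) = 0 := by
        rw [Finset.sum_sub_distrib, ← Finset.mul_sum, hLsum, mul_zero, sub_zero, sub_self]
      rw [heq] at h3
      exact h3
    have key := constant_of_has_deriv_right_zero
      (f := fun u => (∑ j, xhat u j) - ∑ j, x u j) (a := 0) (b := t)
      (fun s hs => (hg s hs.1).continuousAt.continuousWithinAt)
      (fun s hs => (hg s hs.1).hasDerivWithinAt)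
    have h2 := key t ⟨ht, le_refl t⟩
    have h0' : ∑ j, xhat 0 j = ∑ j, x 0 j := by
      rw [h0]
      simp only [Pi.add_apply]
      rw [Finset.sum_add_distrib, hmsum, add_zero]
    linarith [h2, h0']
  -- disagreement vector and its squared norm
  set S : ℝ → ℝ := fun t => ∑ j, x t j with hS
  set e : ℝ → Fin N → ℝ := fun t i => xhat t i - S t / N with he
  set r : ℝ → ℝ := fun t => ∑ i, (e t i)^2 with hr
  have hesum : ∀ t ≥ (0:ℝ), ∑ i', e t i' = 0 := by
    intro t ht
    simp only [he, Finset.sum_sub_distrib, Finset.sum_const, Finset.card_univ,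
      Fintype.card_fin, nsmul_eq_mul]
    rw [hsum t ht]
    simp only [hS]
    field_simp
    ring
  have hSder : ∀ t : ℝ, HasDerivAt S (∑ j, deriv x t j) t := fun t =>
    HasDerivAt.fun_sum (fun j _ => hx' t j)
  have hep : ∀ t ≥ (0:ℝ), ∀ j, HasDerivAt (fun s => e s j)
      (deriv x t j - β * (L *ᵥ xhat t) j - (∑ l, deriv x t l) / N) t := by
    intro t ht j
    exact (hxh' t ht j).sub ((hSder t).div_const N)
  set r' : ℝ → ℝ := fun t => ∑ i', 2 * e t i' *
      (deriv x t i' - β * (L *ᵥ xhat t) i' - (∑ l, deriv x t l) / N) with hr'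
  have hrd : ∀ t ≥ (0:ℝ), HasDerivAt r (r' t) t := by
    intro t ht
    simp only [hr, hr']
    apply HasDerivAt.fun_sum
    intro i' _
    have h := (hep t ht i').fun_pow 2
    refine h.congr_deriv ?_
    push_cast
    ring
  -- key differential inequality
  have hrineq : ∀ t ≥ (0:ℝ), r' t ≤ γ^2 / k - k * r t := by
    intro t ht
    set P : Fin N → ℝ := fun i' => deriv x t i' - (∑ l, deriv x t l) / N with hP
    have hsplit : r' t = 2 * (∑ i', e t i' * P i') - 2 * β * (e t ⬝ᵥ (L *ᵥ xhat t)) := by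
      simp only [hr', hP, dotProduct, Finset.mul_sum, ← Finset.sum_sub_distrib]
      exact Finset.sum_congr rfl fun i' _ => by ring
    have hLe : e t ⬝ᵥ (L *ᵥ xhat t) = e t ⬝ᵥ (L *ᵥ e t) := by
      have hxe : xhat t = e t + (S t / N) • (fun _ => (1:ℝ)) := by
        funext j; simp [he]
      rw [hxe, Matrix.mulVec_add, Matrix.mulVec_smul, hL,
        SimpleGraph.lapMatrix_mulVec_const_eq_zero, smul_zero, add_zero]
    have hquad : c * r t ≤ e t ⬝ᵥ (L *ᵥ e t) := by
      have h := hcgap (e t) (hesum t ht)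
      rw [← hL] at h
      simpa only [hr] using h
    have hrt0 : 0 ≤ r t := by
      simp only [hr]; positivity
    have hCS : (∑ i', e t i' * P i') ≤ Real.sqrt (r t) * γ := by
      have h1 : (∑ i', e t i' * P i')^2 ≤ (∑ i', (e t i')^2) * (∑ i', (P i')^2) :=
        Finset.sum_mul_sq_le_sq_mul_sq Finset.univ _ _
      have h2 : (∑ i', e t i' * P i')
          ≤ Real.sqrt ((∑ i', (e t i')^2) * (∑ i', (P i')^2)) := by
        calc (∑ i', e t i' * P i') ≤ |∑ i', e t i' * P i'| := le_abs_self _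
          _ = Real.sqrt ((∑ i', e t i' * P i')^2) := (Real.sqrt_sq_eq_abs _).symm
          _ ≤ _ := Real.sqrt_le_sqrt h1
      have hPγ : Real.sqrt (∑ i', (P i')^2) ≤ γ := by
        simpa only [hP] using hproj t ht
      calc (∑ i', e t i' * P i')
          ≤ Real.sqrt ((∑ i', (e t i')^2) * (∑ i', (P i')^2)) := h2
        _ = Real.sqrt (∑ i', (e t i')^2) * Real.sqrt (∑ i', (P i')^2) :=
            Real.sqrt_mul (by positivity) _
        _ ≤ Real.sqrt (r t) * γ := by
            have hre : Real.sqrt (∑ i', (e t i')^2) = Real.sqrt (r t) := by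
              simp only [hr]
            rw [hre]
            exact mul_le_mul_of_nonneg_left hPγ (Real.sqrt_nonneg _)
    have hAM : 2 * (Real.sqrt (r t) * γ) ≤ γ^2 / k + k * r t := by
      have hs := Real.sq_sqrt hrt0
      have key : 2 * (Real.sqrt (r t) * γ) * k ≤ γ^2 + k^2 * r t := by
        nlinarith [sq_nonneg (γ - k * Real.sqrt (r t)), hs]
      calc 2 * (Real.sqrt (r t) * γ) = (2 * (Real.sqrt (r t) * γ) * k) / k := by
            field_simp
        _ ≤ (γ^2 + k^2 * r t) / k := by gcongr
        _ = γ^2 / k + k * r t := by field_simp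
    have hkr : 2 * β * (c * r t) = 2 * (k * r t) := by rw [hk]; ring
    have hmul : 2 * β * (c * r t) ≤ 2 * β * (e t ⬝ᵥ (L *ᵥ e t)) :=
      mul_le_mul_of_nonneg_left hquad (by positivity)
    rw [hsplit, hLe]
    nlinarith [hCS, hAM, hmul, hkr]
  -- linear comparison / Gronwall
  set A := (γ / k)^2 with hA
  have hkA : k * A = γ^2 / k := by
    rw [hA]; field_simp
  set w : ℝ → ℝ := fun t => Real.exp (k * t) * (r t - A) with hw
  have hwd : ∀ t ≥ (0:ℝ), HasDerivAt w
      (Real.exp (k * t) * k * (r t - A) + Real.exp (k * t) * r' t) t := by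
    intro t ht
    have hexp : HasDerivAt (fun s : ℝ => Real.exp (k * s)) (Real.exp (k * t) * k) t := by
      have : HasDerivAt (fun s : ℝ => k * s) k t := by
        simpa using (hasDerivAt_id t).const_mul k
      exact this.exp
    exact hexp.mul ((hrd t ht).sub_const A)
  have hwmono : AntitoneOn w (Set.Ici (0:ℝ)) := by
    apply antitoneOn_of_deriv_nonpos (convex_Ici 0)
    · intro s hs
      exact (hwd s hs).continuousAt.continuousWithinAt
    · rw [interior_Ici]
      intro s hs
      exact (hwd s (le_of_lt hs)).differentiableAt.differentiableWithinAt
    · rw [interior_Ici]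
      intro s hs
      rw [(hwd s (le_of_lt hs)).deriv]
      have h5 : r' s ≤ k * A - k * r s := by
        have := hrineq s (le_of_lt hs)
        rw [hkA]; linarith
      have hexp := (Real.exp_pos (k * s)).le
      calc Real.exp (k*s) * k * (r s - A) + Real.exp (k*s) * r' s
          ≤ Real.exp (k*s) * k * (r s - A) + Real.exp (k*s) * (k * A - k * r s) :=
            add_le_add_right (mul_le_mul_of_nonneg_left h5 hexp) _
        _ = 0 := by ring
  have hrbound : ∀ t ≥ (0:ℝ), r t ≤ A + Real.exp (-(k*t)) * (r 0 - A) := by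
    intro t ht
    have hw0 := hwmono (Set.self_mem_Ici) (Set.mem_Ici.mpr ht) ht
    simp only [hw, mul_zero, Real.exp_zero, one_mul] at hw0
    have hexp := Real.exp_pos (k*t)
    have h6 : r t - A ≤ Real.exp (-(k*t)) * (r 0 - A) := by
      rw [Real.exp_neg, inv_mul_eq_div, le_div_iff₀ hexp]
      calc (r t - A) * Real.exp (k*t) = Real.exp (k*t) * (r t - A) := by ring
        _ ≤ r 0 - A := hw0
    linarith
  -- conclusion via limsup
  set C := |r 0 - A| with hC
  have hb : ∀ᶠ t in atTop, |xhat t i - S t / N|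
      ≤ Real.sqrt (A + Real.exp (-(k*t)) * C) := by
    filter_upwards [eventually_ge_atTop (0:ℝ)] with t ht
    have h7 : (e t i)^2 ≤ r t := by
      simp only [hr]
      exact Finset.single_le_sum (f := fun i' => (e t i')^2)
        (fun j _ => sq_nonneg _) (Finset.mem_univ i)
    have h8 : r t ≤ A + Real.exp (-(k*t)) * C := by
      have h9 : Real.exp (-(k*t)) * (r 0 - A) ≤ Real.exp (-(k*t)) * C :=
        mul_le_mul_of_nonneg_left (le_abs_self _) (Real.exp_pos _).le
      linarith [hrbound t ht]
    have h10 : |e t i| ≤ Real.sqrt (A + Real.exp (-(k*t)) * C) := by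
      rw [← Real.sqrt_sq_eq_abs]
      exact Real.sqrt_le_sqrt (le_trans h7 h8)
    simpa only [he] using h10
  have htend : Tendsto (fun t => Real.sqrt (A + Real.exp (-(k*t)) * C)) atTop
      (𝓝 (Real.sqrt A)) := by
    have h1 : Tendsto (fun t : ℝ => k * t) atTop atTop :=
      Tendsto.const_mul_atTop hkpos tendsto_id
    have h2 : Tendsto (fun t : ℝ => -(k * t)) atTop atBot :=
      tendsto_neg_atTop_atBot.comp h1
    have h3 : Tendsto (fun t : ℝ => Real.exp (-(k*t))) atTop (𝓝 0) :=
      Real.tendsto_exp_atBot.comp h2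
    have h4 : Tendsto (fun t : ℝ => A + Real.exp (-(k*t)) * C) atTop (𝓝 A) := by
      have := (tendsto_const_nhds (x := A)).add (h3.mul_const C)
      simpa using this
    have := h4.sqrt
    simpa using this
  have hcob : atTop.IsCoboundedUnder (· ≤ ·) (fun t => |xhat t i - S t / N|) := by
    apply Filter.IsBoundedUnder.isCoboundedUnder_le
    exact ⟨0, Filter.eventually_map.mpr (Eventually.of_forall fun t => abs_nonneg _)⟩
  calc limsup (fun t : ℝ => |xhat t i - S t / N|) atTop
      ≤ limsup (fun t => Real.sqrt (A + Real.exp (-(k*t)) * C)) atTop :=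
        limsup_le_limsup hb hcob htend.isBoundedUnder_le
    _ = Real.sqrt A := htend.limsup_eq
    _ ≤ ε := by
        rw [hA, Real.sqrt_sq (by positivity : 0 ≤ γ/k)]
        exact hγk
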